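/- Let H = ⊕_{i=0}^d H_i act decoupled on a pure d-dimensional simplicial complex Σ, let σ ∈ Σ be a face and β a facet containing σ. Then stab_H(σ) = ⊕_{x ∈ β∖σ} stab_H(β∖{x}). -/
import Mathlib


open scoped Pointwise

/-- Let `H = ⊕_{i=0}^d H_i` act decoupled on a pure `d`-dimensional
simplicial complex `Σ`, let `σ ∈ Σ` and let `β` be a facet containing `σ`.  Then
`stab_H(σ) = ⊕_{x ∈ β∖σ} stab_H(β∖{x})` (the stabilizers on the right are independent
and their join is `stab_H(σ)`). -/
theorem decoupled_stabilizer_decomposition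
    {H V : Type*} [AddCommGroup H] [AddAction H V] [DecidableEq V]
    (cplx : Set (Finset V)) (d : ℕ)
    (hdown : ∀ σ ∈ cplx, ∀ τ : Finset V, τ ⊆ σ → τ ∈ cplx)
    (hinv : ∀ (h : H), ∀ σ ∈ cplx, h +ᵥ σ ∈ cplx)
    (hpure₁ : ∀ σ ∈ cplx, σ.card ≤ d + 1)
    (hpure₂ : ∀ σ ∈ cplx, ∃ β ∈ cplx, σ ⊆ β ∧ β.card = d + 1)
    (htrans : ∀ σ ∈ cplx, ∀ h : H,
        (∃ τ ∈ cplx, σ ⊆ τ ∧ h +ᵥ σ ⊆ τ) → h +ᵥ σ = σ)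
    (Hsub : Fin (d + 1) → AddSubgroup H)
    (hne : ∀ i, Hsub i ≠ ⊥)
    (hsup : (⨆ i, Hsub i) = ⊤)
    (hindep : ∀ i, Disjoint (Hsub i) (⨆ j ∈ ({i}ᶜ : Set (Fin (d + 1))), Hsub j))
    (hdec : ∀ β ∈ cplx, β.card = d + 1 → ∃ e : Fin (d + 1) → V,
        Function.Injective e ∧ Finset.image e Finset.univ = β ∧
        ∀ i : Fin (d + 1), Hsub i = AddAction.stabilizer H (β.erase (e i)))
    (hdim0 : d = 0 → ∀ σ ∈ cplx, σ.Nonempty → ∀ h : H, h +ᵥ σ = σ → h = 0)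
    (σ : Finset V) (hσ : σ ∈ cplx)
    (β : Finset V) (hβ : β ∈ cplx) (hcard : β.card = d + 1) (hsub : σ ⊆ β) :
    (AddAction.stabilizer H σ =
        ⨆ x ∈ (β \ σ), AddAction.stabilizer H (β.erase x)) ∧
    (∀ x ∈ β \ σ, Disjoint (AddAction.stabilizer H (β.erase x))
        (⨆ y ∈ (β \ σ).erase x, AddAction.stabilizer H (β.erase y))) := by
  obtain ⟨e, einj, eimg, estab⟩ := hdec β hβ hcard
  -- monotonicity: if ρ ⊆ τ ∈ cplx then stab τ ≤ stab ρ
  have mono : ∀ τ ∈ cplx, ∀ ρ : Finset V, ρ ⊆ τ →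
      AddAction.stabilizer H τ ≤ AddAction.stabilizer H ρ := by
    intro τ hτ ρ hρ g hg
    rw [AddAction.mem_stabilizer_iff] at hg ⊢
    refine htrans ρ (hdown τ hτ ρ hρ) g ⟨τ, hτ, hρ, ?_⟩
    calc g +ᵥ ρ ⊆ g +ᵥ τ := Finset.vadd_finset_subset_vadd_finset hρ
      _ = τ := hg
  have emem : ∀ i, e i ∈ β := by
    intro i; rw [← eimg]; exact Finset.mem_image_of_mem e (Finset.mem_univ i)
  have erase_mem : ∀ x : V, β.erase x ∈ cplx :=
    fun x => hdown β hβ _ (Finset.erase_subset x β)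
  have fix_of_single : ∀ (g : H) (v : V),
      g ∈ AddAction.stabilizer H ({v} : Finset V) → g +ᵥ v = v := by
    intro g v hg
    have h1 : g +ᵥ ({v} : Finset V) = {v} := AddAction.mem_stabilizer_iff.1 hg
    rw [Finset.vadd_finset_singleton] at h1
    exact Finset.singleton_injective h1
  -- the right-hand side is contained in stab σ
  have rhs_le : (⨆ x ∈ β \ σ, AddAction.stabilizer H (β.erase x)) ≤
      AddAction.stabilizer H σ := by
    refine iSup₂_le fun x hx => mono _ (erase_mem x) σ fun v hv => ?_
    exact Finset.mem_erase.2
      ⟨fun hvx => (Finset.mem_sdiff.1 hx).2 (hvx ▸ hv), hsub hv⟩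
  set A : AddSubgroup H := ⨆ (i) (_ : e i ∈ σ), Hsub i with hA
  set B : AddSubgroup H := ⨆ (i) (_ : e i ∉ σ), Hsub i with hB
  have hsplit : (⊤ : AddSubgroup H) ≤ A ⊔ B := by
    rw [← hsup]
    refine iSup_le fun i => ?_
    by_cases hi : e i ∈ σ
    · exact le_trans (le_iSup₂ (f := fun i (_ : e i ∈ σ) => Hsub i) i hi) le_sup_left
    · exact le_trans (le_iSup₂ (f := fun i (_ : e i ∉ σ) => Hsub i) i hi) le_sup_right
  have hBle : B ≤ ⨆ x ∈ β \ σ, AddAction.stabilizer H (β.erase x) := by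
    refine iSup₂_le fun i hi => ?_
    rw [estab i]
    exact le_iSup₂ (f := fun x (_ : x ∈ β \ σ) => AddAction.stabilizer H (β.erase x))
      (e i) (Finset.mem_sdiff.2 ⟨emem i, hi⟩)
  constructor
  · refine le_antisymm ?_ rhs_le
    intro h hh
    obtain ⟨a, ha, b, hb, hab⟩ := AddSubgroup.mem_sup.1 (hsplit (AddSubgroup.mem_top h))
    have hbσ : b ∈ AddAction.stabilizer H σ := rhs_le (hBle hb)
    have haσ : a ∈ AddAction.stabilizer H σ := by
      have : a = h - b := by rw [← hab]; abel
      rw [this]; exact sub_mem hh hbσ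
    -- a fixes every vertex of β
    have hafix : ∀ v ∈ β, a +ᵥ v = v := by
      intro v hv
      by_cases hvσ : v ∈ σ
      · exact fix_of_single a v
          (mono σ hσ {v} (Finset.singleton_subset_iff.2 hvσ) haσ)
      · refine fix_of_single a v ?_
        have hAle : A ≤ AddAction.stabilizer H ({v} : Finset V) := by
          refine iSup₂_le fun i hi => ?_
          rw [estab i]
          exact mono _ (erase_mem (e i)) {v}
            (Finset.singleton_subset_iff.2
              (Finset.mem_erase.2 ⟨fun hve => hvσ (hve ▸ hi), hv⟩))
        exact hAle ha
    have haβ : a ∈ AddAction.stabilizer H β := by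
      rw [AddAction.mem_stabilizer_iff]
      apply Finset.eq_of_subset_of_card_le
      · intro w hw
        rw [Finset.mem_vadd_finset] at hw
        obtain ⟨v, hv, rfl⟩ := hw
        rw [hafix v hv]; exact hv
      · rw [Finset.card_vadd_finset]
    have ha0 : a = 0 := by
      rcases Nat.eq_zero_or_pos d with hd | hd
      · exact hdim0 hd β hβ (Finset.card_pos.1 (by omega)) a
          (AddAction.mem_stabilizer_iff.1 haβ)
      · have i0 : Fin (d + 1) := ⟨0, by omega⟩
        have i1mem : (⟨1, by omega⟩ : Fin (d + 1)) ∈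
            ({(⟨0, by omega⟩ : Fin (d + 1))}ᶜ : Set (Fin (d + 1))) := by
          simp [Fin.ext_iff]
        have hain : ∀ i : Fin (d + 1), a ∈ Hsub i := by
          intro i
          rw [estab i]
          exact mono β hβ _ (Finset.erase_subset _ _) haβ
        have := (hindep ⟨0, by omega⟩).le_bot
          (⟨hain _, le_iSup₂ (f := fun j (_ : j ∈ ({(⟨0, by omega⟩ : Fin (d+1))}ᶜ :
            Set (Fin (d + 1)))) => Hsub j) _ i1mem (hain ⟨1, by omega⟩)⟩ :
            a ∈ Hsub ⟨0, by omega⟩ ⊓ _)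
        exact AddSubgroup.mem_bot.1 this
    rw [← hab, ha0, zero_add]
    exact hBle hb
  · intro x hx
    obtain ⟨hxβ, hxσ⟩ := Finset.mem_sdiff.1 hx
    obtain ⟨i, -, rfl⟩ := Finset.mem_image.1 (eimg ▸ hxβ)
    rw [← estab i]
    refine (hindep i).mono_right ?_
    refine iSup₂_le fun y hy => ?_
    obtain ⟨hyne, hyβσ⟩ := Finset.mem_erase.1 hy
    obtain ⟨j, -, rfl⟩ := Finset.mem_image.1 (eimg ▸ (Finset.mem_sdiff.1 hyβσ).1)
    rw [← estab j]
    refine le_iSup₂ (f := fun j (_ : j ∈ ({i}ᶜ : Set (Fin (d + 1)))) => Hsub j) j ?_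
    simp only [Set.mem_compl_iff, Set.mem_singleton_iff]
    exact fun hji => hyne (congrArg e hji)
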